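/- arXiv:1301.3569 — 2 statements merged into one kernel-verified Lean document; each statement's English description precedes it below -/
import Mathlib

section
/- There is a bijection between strict subsets S ⊊ ℤ/nℤ and cyclically decreasing elements of the affine symmetric group S̃_n: each strict subset S corresponds to a unique cyclically decreasing element whose reduced words use exactly the generators {s_i : i ∈ S}. -/
/-- The defining relators of the affine symmetric group `S̃_n`. -/
def affineRels (n : ℕ) : Set (FreeGroup (ZMod n)) :=
  {r | (∃ i : ZMod n, r = FreeGroup.of i * FreeGroup.of i) ∨
       (∃ i : ZMod n, r = FreeGroup.of i * FreeGroup.of (i + 1) * FreeGroup.of i *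
          (FreeGroup.of (i + 1) * FreeGroup.of i * FreeGroup.of (i + 1))⁻¹) ∨
       (∃ i j : ZMod n, j ≠ i ∧ j ≠ i + 1 ∧ i ≠ j + 1 ∧
          r = FreeGroup.of i * FreeGroup.of j * (FreeGroup.of j * FreeGroup.of i)⁻¹)}

/-- The affine symmetric group `S̃_n`. -/
abbrev AffineSymmetricGroup (n : ℕ) := PresentedGroup (affineRels n)

/-- The product of the word `l` of simple generators in `S̃_n`. -/
def awordProd (n : ℕ) (l : List (ZMod n)) : AffineSymmetricGroup n :=
  (l.map PresentedGroup.of).prod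

/-- `l` is a reduced word for `w ∈ S̃_n`. -/
def IsReducedAWord (n : ℕ) (w : AffineSymmetricGroup n) (l : List (ZMod n)) : Prop :=
  awordProd n l = w ∧ ∀ l' : List (ZMod n), awordProd n l' = w → l.length ≤ l'.length

/-- A word with letters in `ℤ/nℤ` is cyclically decreasing if each letter occurs at
most once and, whenever `i` and `i+1` both occur, `i+1` precedes `i`. -/
def IsCyclicallyDecreasingWord (n : ℕ) (l : List (ZMod n)) : Prop :=
  l.Nodup ∧ ∀ i : ZMod n, i ∈ l → i + 1 ∈ l → l.idxOf (i + 1) < l.idxOf i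

/-- An affine permutation is cyclically decreasing if it has a cyclically decreasing
reduced word. -/
def IsCyclicallyDecreasing (n : ℕ) (w : AffineSymmetricGroup n) : Prop :=
  ∃ l : List (ZMod n), IsCyclicallyDecreasingWord n l ∧ IsReducedAWord n w l

namespace CycDec

variable {n : ℕ}

def sigFun (n : ℕ) (i : ZMod n) : ℤ → ℤ := fun x =>
  if (x : ZMod n) = i then x + 1 else if (x : ZMod n) = i + 1 then x - 1 else x

lemma natCast_ne_zero' (hn : 2 < n) {a : ℕ} (ha : 0 < a) (ha' : a < n) : ((a:ℕ) : ZMod n) ≠ 0 := by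
  rw [Ne, ZMod.natCast_eq_zero_iff]
  intro h
  have := Nat.le_of_dvd ha h
  omega

lemma one_ne_zero' (hn : 2 < n) : (1 : ZMod n) ≠ 0 := by
  simpa using natCast_ne_zero' hn (a := 1) (by omega) (by omega)

lemma two_ne_zero' (hn : 2 < n) : (2 : ZMod n) ≠ 0 := by
  simpa using natCast_ne_zero' hn (a := 2) (by omega) (by omega)

lemma sigFun_involutive (hn : 2 < n) (i : ZMod n) : Function.Involutive (sigFun n i) := by
  intro x
  have h1 : (1 : ZMod n) ≠ 0 := one_ne_zero' hn
  unfold sigFun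
  split_ifs with h h' <;> push_cast <;> simp_all <;> omega

/-- The affine swap permutation `σ_i` of `ℤ`. -/
def sig (hn : 2 < n) (i : ZMod n) : Equiv.Perm ℤ := (sigFun_involutive hn i).toPerm

@[simp] lemma sig_apply (hn : 2 < n) (i : ZMod n) (x : ℤ) : sig hn i x = sigFun n i x := rfl

lemma sig_apply_eq (hn : 2 < n) {i : ZMod n} {x : ℤ} (h : (x : ZMod n) = i) :
    sig hn i x = x + 1 := by simp [sigFun, h]

lemma sig_apply_eq_add_one (hn : 2 < n) {i : ZMod n} {x : ℤ} (h : (x : ZMod n) = i + 1) :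
    sig hn i x = x - 1 := by
  have hne : (x : ZMod n) ≠ i := by
    rw [h]
    intro hh
    exact one_ne_zero' hn (by linear_combination hh)
  simp only [sig_apply, sigFun, if_neg hne, if_pos h]

lemma sig_apply_ne (hn : 2 < n) {i : ZMod n} {x : ℤ} (h : (x : ZMod n) ≠ i)
    (h' : (x : ZMod n) ≠ i + 1) : sig hn i x = x := by simp [sigFun, h, h']

end CycDec

namespace CycDec

variable {n : ℕ}

lemma castadd (x : ℤ) : ((x + 1 : ℤ) : ZMod n) = (x : ZMod n) + 1 := by push_cast; ring
lemma castsub (x : ℤ) : ((x - 1 : ℤ) : ZMod n) = (x : ZMod n) - 1 := by push_cast; ring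

lemma sig_sq (hn : 2 < n) (i : ZMod n) : sig hn i * sig hn i = 1 := by
  ext x
  simp [sigFun_involutive hn i x, sig]

lemma ne_add_one (hn : 2 < n) (a : ZMod n) : a ≠ a + 1 := by
  intro h; exact one_ne_zero' hn (by linear_combination -h)

lemma ne_add_two (hn : 2 < n) (a : ZMod n) : a ≠ a + 2 := by
  intro h; exact two_ne_zero' hn (by linear_combination -h)

lemma sig_braid (hn : 2 < n) (i : ZMod n) :
    sig hn i * sig hn (i+1) * sig hn i = sig hn (i+1) * sig hn i * sig hn (i+1) := by
  have q1 : (i + 1 + 1 : ZMod n) ≠ i := fun h => two_ne_zero' hn (by linear_combination h)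
  have q2 : (i + 1 + 1 : ZMod n) ≠ i + 1 := fun h => one_ne_zero' hn (by linear_combination h)
  have q3 : (i : ZMod n) ≠ i + 1 := ne_add_one hn i
  have q4 : (i : ZMod n) ≠ i + 1 + 1 := fun h => two_ne_zero' hn (by linear_combination -h)
  ext x
  simp only [Equiv.Perm.mul_apply]
  by_cases h0 : (x : ZMod n) = i
  · have h0' : ((x + 1 : ℤ) : ZMod n) = i + 1 := by rw [castadd, h0]
    have h0'' : ((x + 1 + 1 : ℤ) : ZMod n) = i + 1 + 1 := by rw [castadd, h0']
    have A1 : sig hn i x = x + 1 := sig_apply_eq hn h0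
    have A2 : sig hn (i+1) (x+1) = x + 1 + 1 := sig_apply_eq hn h0'
    have A3 : sig hn i (x+1+1) = x + 1 + 1 :=
      sig_apply_ne hn (by rw [h0'']; exact q1) (by rw [h0'']; exact q2)
    have B1 : sig hn (i+1) x = x :=
      sig_apply_ne hn (by rw [h0]; exact q3) (by rw [h0]; exact q4)
    simp only [A1, A2, A3, B1]
  · by_cases h1 : (x : ZMod n) = i + 1
    · have hs : ((x - 1 : ℤ) : ZMod n) = i := by rw [castsub, h1]; ring
      have hp : ((x + 1 : ℤ) : ZMod n) = i + 1 + 1 := by rw [castadd, h1]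
      have A1 : sig hn i x = x - 1 := sig_apply_eq_add_one hn h1
      have A2 : sig hn (i+1) (x-1) = x - 1 :=
        sig_apply_ne hn (by rw [hs]; exact q3) (by rw [hs]; exact q4)
      have A3 : sig hn i (x-1) = x - 1 + 1 := sig_apply_eq hn hs
      have B1 : sig hn (i+1) x = x + 1 := sig_apply_eq hn h1
      have B2 : sig hn i (x+1) = x + 1 :=
        sig_apply_ne hn (by rw [hp]; exact q1) (by rw [hp]; exact q2)
      have B3 : sig hn (i+1) (x+1) = x + 1 - 1 := sig_apply_eq_add_one hn hp
      simp only [A1, A2, A3, B1, B2, B3]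
      ring
    · by_cases h2 : (x : ZMod n) = i + 1 + 1
      · have hs : ((x - 1 : ℤ) : ZMod n) = i + 1 := by rw [castsub, h2]; ring
        have hs2 : ((x - 1 - 1 : ℤ) : ZMod n) = i := by rw [castsub, hs]; ring
        have A1 : sig hn i x = x :=
          sig_apply_ne hn (by rw [h2]; exact q1) (by rw [h2]; exact q2)
        have A2 : sig hn (i+1) x = x - 1 := sig_apply_eq_add_one hn h2
        have A3 : sig hn i (x-1) = x - 1 - 1 := sig_apply_eq_add_one hn hs
        have A4 : sig hn (i+1) (x-1-1) = x - 1 - 1 :=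
          sig_apply_ne hn (by rw [hs2]; exact q3) (by rw [hs2]; exact q4)
        simp only [A1, A2, A3, A4]
      · have C1 : sig hn i x = x := sig_apply_ne hn h0 h1
        have C2 : sig hn (i+1) x = x := sig_apply_ne hn h1 h2
        simp only [C1, C2]

lemma sig_comm (hn : 2 < n) {i j : ZMod n} (h1 : j ≠ i) (h2 : j ≠ i + 1) (h3 : i ≠ j + 1) :
    sig hn i * sig hn j = sig hn j * sig hn i := by
  have hij : i ≠ j := fun h => h1 h.symm
  have q1 : (i + 1 : ZMod n) ≠ j := fun h => h2 h.symm
  have q2 : (i + 1 : ZMod n) ≠ j + 1 := fun h => hij (by linear_combination h)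
  have q3 : (j + 1 : ZMod n) ≠ i := fun h => h3 h.symm
  have q4 : (j + 1 : ZMod n) ≠ i + 1 := fun h => h1 (by linear_combination h)
  ext x
  simp only [Equiv.Perm.mul_apply]
  by_cases ha : (x : ZMod n) = i
  · have hp : ((x + 1 : ℤ) : ZMod n) = i + 1 := by rw [castadd, ha]
    have A1 : sig hn i x = x + 1 := sig_apply_eq hn ha
    have A2 : sig hn j x = x := sig_apply_ne hn (by rw [ha]; exact hij) (by rw [ha]; exact h3)
    have A3 : sig hn j (x+1) = x + 1 := sig_apply_ne hn (by rw [hp]; exact q1) (by rw [hp]; exact q2)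
    simp only [A1, A2, A3]
  · by_cases hb : (x : ZMod n) = i + 1
    · have hs : ((x - 1 : ℤ) : ZMod n) = i := by rw [castsub, hb]; ring
      have A1 : sig hn i x = x - 1 := sig_apply_eq_add_one hn hb
      have A2 : sig hn j x = x :=
        sig_apply_ne hn (by rw [hb]; exact fun h => h2 h.symm) (by rw [hb]; exact q2)
      have A3 : sig hn j (x-1) = x - 1 :=
        sig_apply_ne hn (by rw [hs]; exact hij) (by rw [hs]; exact h3)
      simp only [A1, A2, A3]
    · by_cases hc : (x : ZMod n) = j
      · have hp : ((x + 1 : ℤ) : ZMod n) = j + 1 := by rw [castadd, hc]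
        have B1 : sig hn j x = x + 1 := sig_apply_eq hn hc
        have B2 : sig hn i x = x := sig_apply_ne hn (by rw [hc]; exact h1) (by rw [hc]; exact h2)
        have B3 : sig hn i (x+1) = x + 1 :=
          sig_apply_ne hn (by rw [hp]; exact q3) (by rw [hp]; exact q4)
        simp only [B1, B2, B3]
      · by_cases hd : (x : ZMod n) = j + 1
        · have hs : ((x - 1 : ℤ) : ZMod n) = j := by rw [castsub, hd]; ring
          have B1 : sig hn j x = x - 1 := sig_apply_eq_add_one hn hd
          have B2 : sig hn i x = x :=
            sig_apply_ne hn (by rw [hd]; exact q3) (by rw [hd]; exact q4)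
          have B3 : sig hn i (x-1) = x - 1 :=
            sig_apply_ne hn (by rw [hs]; exact h1) (by rw [hs]; exact h2)
          simp only [B1, B2, B3]
        · have C1 : sig hn i x = x := sig_apply_ne hn ha hb
          have C2 : sig hn j x = x := sig_apply_ne hn hc hd
          simp only [C1, C2]

end CycDec

namespace CycDec

variable {n : ℕ}

lemma rels_map_one (hn : 2 < n) :
    ∀ r ∈ affineRels n, FreeGroup.lift (fun i => sig hn i) r = 1 := by
  rintro r (⟨i, rfl⟩ | ⟨i, rfl⟩ | ⟨i, j, hji, hji1, hij1, rfl⟩) <;>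
    simp only [map_mul, map_inv, FreeGroup.lift_apply_of]
  · exact sig_sq hn i
  · rw [mul_inv_eq_one]; exact sig_braid hn i
  · rw [mul_inv_eq_one]; exact sig_comm hn hji hji1 hij1

/-- The permutation representation of the affine symmetric group on `ℤ`. -/
def phi (hn : 2 < n) : AffineSymmetricGroup n →* Equiv.Perm ℤ :=
  PresentedGroup.toGroup (rels_map_one hn)

@[simp] lemma phi_of (hn : 2 < n) (i : ZMod n) : phi hn (PresentedGroup.of i) = sig hn i :=
  PresentedGroup.toGroup.of _

lemma awordProd_nil : awordProd n [] = 1 := rfl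

lemma awordProd_cons (a : ZMod n) (l : List (ZMod n)) :
    awordProd n (a :: l) = PresentedGroup.of a * awordProd n l := by
  simp [awordProd]

lemma awordProd_append (l₁ l₂ : List (ZMod n)) :
    awordProd n (l₁ ++ l₂) = awordProd n l₁ * awordProd n l₂ := by
  simp [awordProd]

/-- relations in the group -/
lemma rel_eq_one {r : FreeGroup (ZMod n)} (hr : r ∈ affineRels n) :
    (QuotientGroup.mk r : AffineSymmetricGroup n) = 1 := by
  rw [QuotientGroup.eq_one_iff]
  exact Subgroup.subset_normalClosure hr

lemma of_mul_of_self (i : ZMod n) :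
    (PresentedGroup.of (rels := affineRels n) i) * PresentedGroup.of i = 1 := by
  have := rel_eq_one (n := n) (r := FreeGroup.of i * FreeGroup.of i) (Or.inl ⟨i, rfl⟩)
  exact this

lemma of_comm {i j : ZMod n} (h1 : j ≠ i) (h2 : j ≠ i + 1) (h3 : i ≠ j + 1) :
    (PresentedGroup.of (rels := affineRels n) i) * PresentedGroup.of j =
      PresentedGroup.of j * PresentedGroup.of i := by
  have := rel_eq_one (n := n)
    (r := FreeGroup.of i * FreeGroup.of j * (FreeGroup.of j * FreeGroup.of i)⁻¹)
    (Or.inr (Or.inr ⟨i, j, h1, h2, h3, rfl⟩))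
  rw [← mul_inv_eq_one]
  exact this

end CycDec

namespace CycDec

variable {n : ℕ}

/-- Convenient characterization of cyclically decreasing words. -/
def PW (n : ℕ) (l : List (ZMod n)) : Prop :=
  l.Nodup ∧ l.Pairwise (fun a b => b ≠ a + 1)

lemma pw_iff (hn : 2 < n) (l : List (ZMod n)) :
    PW n l ↔ IsCyclicallyDecreasingWord n l := by
  constructor
  · rintro ⟨hnd, hpw⟩
    refine ⟨hnd, fun i hi hi1 => ?_⟩
    have h1 : l.idxOf i < l.length := List.idxOf_lt_length_iff.2 hi
    have h2 : l.idxOf (i+1) < l.length := List.idxOf_lt_length_iff.2 hi1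
    rcases lt_trichotomy (l.idxOf (i+1)) (l.idxOf i) with h | h | h
    · exact h
    · exfalso
      have hgi := List.idxOf_get (l := l) (a := i) h1
      have hgi1 := List.idxOf_get (l := l) (a := i+1) h2
      have hfin : (⟨List.idxOf (i+1) l, h2⟩ : Fin l.length) = ⟨List.idxOf i l, h1⟩ :=
        Fin.ext h
      have heq : i + 1 = i := by rw [← hgi1, hfin]; exact hgi
      exact ne_add_one hn i heq.symm
    · exfalso
      have := (List.pairwise_iff_get.1 hpw) ⟨l.idxOf i, h1⟩ ⟨l.idxOf (i+1), h2⟩ h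
      rw [List.idxOf_get h1, List.idxOf_get h2] at this
      exact this rfl
  · rintro ⟨hnd, hord⟩
    refine ⟨hnd, List.pairwise_iff_get.2 fun p q hpq => ?_⟩
    intro hEq
    set a := l.get p with ha
    have hmem : a ∈ l := List.get_mem l p
    have hmem1 : a + 1 ∈ l := hEq ▸ List.get_mem l q
    have := hord a hmem hmem1
    have hia : l.idxOf a = (p : ℕ) := by rw [ha]; exact List.get_idxOf hnd p
    have hia1 : l.idxOf (a+1) = (q : ℕ) := by rw [← hEq]; exact List.get_idxOf hnd q
    omega

lemma awordProd_pull {a : ZMod n} :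
    ∀ (u : List (ZMod n)) (v : List (ZMod n)),
      (∀ b ∈ u, b ≠ a ∧ b ≠ a + 1 ∧ a ≠ b + 1) →
      awordProd n (u ++ a :: v) = PresentedGroup.of a * awordProd n (u ++ v) := by
  intro u
  induction u with
  | nil => intro v _; simp [awordProd_cons]
  | cons b u ih =>
    intro v hcomm
    obtain ⟨hb1, hb2, hb3⟩ := hcomm b (List.mem_cons_self)
    have hrest : ∀ c ∈ u, c ≠ a ∧ c ≠ a + 1 ∧ a ≠ c + 1 :=
      fun c hc => hcomm c (List.mem_cons_of_mem _ hc)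
    calc awordProd n ((b :: u) ++ a :: v)
        = PresentedGroup.of b * awordProd n (u ++ a :: v) := awordProd_cons _ _
      _ = PresentedGroup.of b * (PresentedGroup.of a * awordProd n (u ++ v)) := by
          rw [ih v hrest]
      _ = (PresentedGroup.of b * PresentedGroup.of a) * awordProd n (u ++ v) := by
          rw [mul_assoc]
      _ = (PresentedGroup.of a * PresentedGroup.of b) * awordProd n (u ++ v) := by
          rw [of_comm hb1 hb2 hb3]
      _ = PresentedGroup.of a * awordProd n ((b :: u) ++ v) := by
          rw [mul_assoc, ← awordProd_cons]; rfl

lemma prod_eq_of_pw (hn : 2 < n) : ∀ (l l' : List (ZMod n)), PW n l → PW n l' →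
    l.toFinset = l'.toFinset → awordProd n l = awordProd n l' := by
  intro l
  induction l with
  | nil =>
    intro l' _ _ h
    have : l'.toFinset = ∅ := by simpa using h.symm
    rw [List.toFinset_eq_empty_iff] at this
    subst this; rfl
  | cons a t ih =>
    intro l' hl hl' hS
    have ha : a ∈ l' := by
      have : a ∈ l'.toFinset := hS ▸ (by simp)
      simpa using this
    obtain ⟨u, v, rfl⟩ := List.append_of_mem ha
    have hnd : (a :: t).Nodup := hl.1
    have hnd' : (u ++ a :: v).Nodup := hl'.1
    have hanotu : a ∉ u := by
      intro hmem
      exact (List.disjoint_of_nodup_append hnd') hmem (List.mem_cons_self)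
    have hanotuv : a ∉ u ++ v := by
      have hav : a ∉ v := by
        have := (List.nodup_append.1 hnd').2.1
        exact (List.nodup_cons.1 this).1
      simp [hanotu, hav]
    have hanott : a ∉ t := (List.nodup_cons.1 hnd).1
    have ha1 : a + 1 ∉ (u ++ a :: v).toFinset := by
      rw [← hS]
      simp only [List.toFinset_cons, Finset.mem_insert, List.mem_toFinset]
      rintro (h | h)
      · exact ne_add_one hn a h.symm
      · exact (List.pairwise_cons.1 hl.2).1 _ h rfl
    have hcomm : ∀ b ∈ u, b ≠ a ∧ b ≠ a + 1 ∧ a ≠ b + 1 := by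
      intro b hb
      refine ⟨fun h => hanotu (h ▸ hb), fun h => ?_, fun h => ?_⟩
      · exact ha1 (by simp only [List.mem_toFinset]; exact h ▸ (by simp [hb]))
      · have := (List.pairwise_append.1 hl'.2).2.2 b hb a (List.mem_cons_self)
        exact this h
    have hsub : List.Sublist (u ++ v) (u ++ a :: v) :=
      (List.sublist_cons_self a v).append_left u
    have pwt : PW n t := ⟨(List.nodup_cons.1 hnd).2, (List.pairwise_cons.1 hl.2).2⟩
    have pwuv : PW n (u ++ v) := ⟨hnd'.sublist hsub, hl'.2.sublist hsub⟩
    have hfin : t.toFinset = (u ++ v).toFinset := by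
      ext x
      simp only [List.mem_toFinset, List.mem_append]
      by_cases hx : x = a
      · subst hx
        exact iff_of_false hanott (fun h => hanotuv (List.mem_append.2 h))
      · have h := Finset.ext_iff.1 hS x
        simp only [List.toFinset_cons, Finset.mem_insert, List.mem_toFinset,
          List.mem_append, List.mem_cons] at h
        tauto
    rw [awordProd_pull u v hcomm, awordProd_cons, ih (u ++ v) pwt pwuv hfin]

end CycDec

namespace CycDec

variable {n : ℕ}

lemma natCast_inj' (hn : 2 < n) {a b : ℕ} (ha : a < n) (hb : b < n)
    (h : (a : ZMod n) = b) : a = b := by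
  haveI : NeZero n := ⟨by omega⟩
  have := congrArg ZMod.val h
  rwa [ZMod.val_cast_of_lt ha, ZMod.val_cast_of_lt hb] at this

/-- The canonical cyclically decreasing word for support `S`, relative to a missing
residue `m`. -/
def cword (n : ℕ) (S : Finset (ZMod n)) (m : ZMod n) : List (ZMod n) :=
  ((List.range (n-1)).map (fun k : ℕ => m - 1 - (k : ZMod n))).filter (fun j => j ∈ S)

lemma base_nodup (hn : 2 < n) (m : ZMod n) :
    ((List.range (n-1)).map (fun k : ℕ => m - 1 - (k : ZMod n))).Nodup := by
  refine List.Nodup.map_on ?_ (List.nodup_range)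
  intro k1 h1 k2 h2 h
  rw [List.mem_range] at h1 h2
  have : ((k1 : ℕ) : ZMod n) = k2 := by linear_combination -h
  exact natCast_inj' hn (by omega) (by omega) this

lemma base_pairwise (hn : 2 < n) (m : ZMod n) :
    ((List.range (n-1)).map (fun k : ℕ => m - 1 - (k : ZMod n))).Pairwise
      (fun a b => b ≠ a + 1) := by
  rw [List.pairwise_map]
  have : List.Pairwise (· < ·) (List.range (n-1)) := List.pairwise_lt_range
  refine this.imp_of_mem ?_
  intro k1 k2 h1 h2 hlt heq
  rw [List.mem_range] at h1 h2
  have hz : (k1 : ZMod n) = ((k2 + 1 : ℕ) : ZMod n) := by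
    push_cast
    linear_combination heq
  have := natCast_inj' hn (by omega) (by omega) hz
  omega

lemma cword_sublist (S : Finset (ZMod n)) (m : ZMod n) :
    List.Sublist (cword n S m) ((List.range (n-1)).map (fun k : ℕ => m - 1 - (k : ZMod n))) :=
  List.filter_sublist

lemma cword_pw (hn : 2 < n) (S : Finset (ZMod n)) (m : ZMod n) : PW n (cword n S m) :=
  ⟨(base_nodup hn m).sublist (cword_sublist S m),
   (base_pairwise hn m).sublist (cword_sublist S m)⟩

lemma cword_toFinset (hn : 2 < n) {S : Finset (ZMod n)} {m : ZMod n} (hm : m ∉ S) :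
    (cword n S m).toFinset = S := by
  haveI : NeZero n := ⟨by omega⟩
  ext x
  simp only [List.mem_toFinset, cword, List.mem_filter, List.mem_map, List.mem_range,
    decide_eq_true_eq]
  constructor
  · rintro ⟨_, hx⟩; exact hx
  · intro hx
    refine ⟨⟨(m - 1 - x).val, ?_, ?_⟩, hx⟩
    · have hlt : (m - 1 - x).val < n := ZMod.val_lt _
      rcases Nat.lt_or_ge (m - 1 - x).val (n-1) with h | h
      · exact h
      · exfalso
        have hval : (m - 1 - x).val = n - 1 := by omega
        have : m - 1 - x = ((n - 1 : ℕ) : ZMod n) := by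
          rw [← hval, ZMod.natCast_rightInverse _]
        have hneg : ((n - 1 : ℕ) : ZMod n) = -1 := by
          rw [Nat.cast_sub (show 1 ≤ n by omega), ZMod.natCast_self]
          simp
        rw [hneg] at this
        have : x = m := by linear_combination -this
        exact hm (this ▸ hx)
    · rw [ZMod.natCast_rightInverse _]
      ring

lemma cword_length (hn : 2 < n) {S : Finset (ZMod n)} {m : ZMod n} (hm : m ∉ S) :
    (cword n S m).length = S.card := by
  rw [← List.toFinset_card_of_nodup (cword_pw hn S m).1, cword_toFinset hn hm]

end CycDec

namespace CycDec

variable {n : ℕ}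

def cutKeep (c : ℤ) (π : Equiv.Perm ℤ) : Prop := ∀ x : ℤ, π x ≤ c ↔ x ≤ c

lemma sig_cutKeep (hn : 2 < n) {j : ZMod n} {c : ℤ} (h : (c : ZMod n) ≠ j) :
    cutKeep c (sig hn j) := by
  intro x
  by_cases h1 : (x : ZMod n) = j
  · rw [sig_apply_eq hn h1]
    have hxc : x ≠ c := fun he => h (he ▸ h1)
    omega
  · by_cases h2 : (x : ZMod n) = j + 1
    · rw [sig_apply_eq_add_one hn h2]
      have hxc : x ≠ c + 1 := by
        intro he
        rw [he, castadd] at h2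
        exact h (by linear_combination h2)
      omega
    · rw [sig_apply_ne hn h1 h2]

lemma prod_cutKeep (hn : 2 < n) {c : ℤ} :
    ∀ {l : List (ZMod n)}, (∀ j ∈ l, (c : ZMod n) ≠ j) →
      cutKeep c (phi hn (awordProd n l)) := by
  intro l
  induction l with
  | nil => intro _ x; simp [awordProd_nil]
  | cons a t ih =>
    intro h x
    rw [awordProd_cons, map_mul, Equiv.Perm.mul_apply, phi_of]
    have h1 := sig_cutKeep hn (h a (List.mem_cons_self))
    rw [h1 _]
    exact ih (fun j hj => h j (List.mem_cons_of_mem _ hj)) x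

lemma prod_fix (hn : 2 < n) {x : ℤ} :
    ∀ {l : List (ZMod n)}, (∀ j ∈ l, (x : ZMod n) ≠ j ∧ (x : ZMod n) ≠ j + 1) →
      phi hn (awordProd n l) x = x := by
  intro l
  induction l with
  | nil => simp [awordProd_nil]
  | cons a t ih =>
    intro h
    rw [awordProd_cons, map_mul, Equiv.Perm.mul_apply, phi_of,
      ih (fun j hj => h j (List.mem_cons_of_mem _ hj)),
      sig_apply_ne hn (h a (List.mem_cons_self)).1 (h a (List.mem_cons_self)).2]

lemma phi_block (hn : 2 < n) (m : ZMod n) :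
    ∀ (K : ℕ) (x : ℤ), (x : ZMod n) = m - (K : ℕ) →
      phi hn (awordProd n ((List.range K).map (fun k : ℕ => m - 1 - (k : ZMod n)))) x
        = x + K := by
  intro K
  induction K with
  | zero => intro x _; simp [awordProd_nil]
  | succ K ih =>
    intro x hx
    rw [List.range_succ, List.map_append, awordProd_append, map_mul, Equiv.Perm.mul_apply]
    have hx' : (x : ZMod n) = m - 1 - (K : ℕ) := by
      rw [hx]; push_cast; ring
    simp only [List.map_cons, List.map_nil, awordProd_cons, awordProd_nil, mul_one, phi_of]
    rw [sig_apply_eq hn hx']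
    have hx1 : ((x + 1 : ℤ) : ZMod n) = m - (K : ℕ) := by
      rw [castadd, hx]; push_cast; ring
    rw [ih (x+1) hx1]
    push_cast
    ring

end CycDec

namespace CycDec

variable {n : ℕ}

lemma natCast_val_zmod (hn : 2 < n) (a : ZMod n) : ((a.val : ℕ) : ZMod n) = a := by
  haveI : NeZero n := ⟨by omega⟩
  exact ZMod.natCast_rightInverse a

lemma mem_of_prodeq [NeZero n] (hn : 2 < n) {S : Finset (ZMod n)} (hSne : S ≠ Finset.univ)
    {m : ZMod n} (hm : m ∉ S) {l : List (ZMod n)}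
    (hl : awordProd n l = awordProd n (cword n S m)) {i : ZMod n} (hi : i ∈ S) :
    i ∈ l := by
  obtain ⟨m₀, hm₀⟩ : ∃ m₀, m₀ ∉ S := by
    by_contra hc
    push_neg at hc
    exact hSne (Finset.eq_univ_iff_forall.2 hc)
  have hm₀i : m₀ ≠ i := fun h => hm₀ (h ▸ hi)
  -- upward run length r
  have hup : ∃ t : ℕ, i + ((t + 1 : ℕ) : ZMod n) ∉ S := by
    refine ⟨(m₀ - i).val - 1, ?_⟩
    have hv : (m₀ - i).val ≠ 0 := by
      rw [Ne, ZMod.val_eq_zero, sub_eq_zero]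
      exact hm₀i
    have : ((m₀ - i).val - 1 + 1 : ℕ) = (m₀ - i).val := by omega
    rw [this, natCast_val_zmod hn]
    simpa using hm₀
  set r := Nat.find hup with hr_def
  have hr1 : i + ((r + 1 : ℕ) : ZMod n) ∉ S := Nat.find_spec hup
  have hrup : ∀ u : ℕ, u ≤ r → i + ((u : ℕ) : ZMod n) ∈ S := by
    intro u hu
    match u with
    | 0 => simpa using hi
    | v + 1 =>
      have hlt : v < r := by omega
      have := Nat.find_min hup hlt
      simpa using this
  -- downward run length s
  have hdown : ∃ t : ℕ, i - ((t + 1 : ℕ) : ZMod n) ∉ S := by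
    refine ⟨(i - m₀).val - 1, ?_⟩
    have hv : (i - m₀).val ≠ 0 := by
      rw [Ne, ZMod.val_eq_zero, sub_eq_zero]
      exact fun h => hm₀i h.symm
    have : ((i - m₀).val - 1 + 1 : ℕ) = (i - m₀).val := by omega
    rw [this, natCast_val_zmod hn]
    simpa using hm₀
  set s := Nat.find hdown with hs_def
  have hs1 : i - ((s + 1 : ℕ) : ZMod n) ∉ S := Nat.find_spec hdown
  have hsdown : ∀ u : ℕ, u ≤ s → i - ((u : ℕ) : ZMod n) ∈ S := by
    intro u hu
    match u with
    | 0 => simpa using hi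
    | v + 1 =>
      have hlt : v < s := by omega
      have := Nat.find_min hdown hlt
      simpa using this
  -- the run fits strictly inside Z/n
  have hbound : r + s + 2 ≤ n := by
    by_contra hc
    push_neg at hc
    apply hSne
    ext x
    simp only [Finset.mem_univ, iff_true]
    have hd : (x - i).val < n := ZMod.val_lt _
    rcases le_or_gt (x - i).val r with h | h
    · have := hrup _ h
      rwa [natCast_val_zmod hn, add_sub_cancel] at this
    · have hns : n - (x - i).val ≤ s := by omega
      have := hsdown _ hns
      have hcast : ((n - (x - i).val : ℕ) : ZMod n) = -(x - i) := by
        rw [Nat.cast_sub (by omega), ZMod.natCast_self, natCast_val_zmod hn]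
        ring
      rw [hcast] at this
      simpa using this
    -- done
  set m' : ZMod n := i + ((r + 1 : ℕ) : ZMod n) with hm'_def
  have hprod : awordProd n (cword n S m) = awordProd n (cword n S m') :=
    prod_eq_of_pw hn _ _ (cword_pw hn S m) (cword_pw hn S m')
      (by rw [cword_toFinset hn hm, cword_toFinset hn hr1])
  -- decompose the canonical word for m'
  set K : ℕ := r + s + 1 with hK_def
  set f : ℕ → ZMod n := fun k => m' - 1 - (k : ZMod n) with hf_def
  have hfS : ∀ k : ℕ, k ≤ r + s → f k ∈ S := by
    intro k hk
    rcases le_or_gt k r with h | h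
    · have : f k = i + ((r - k : ℕ) : ZMod n) := by
        rw [hf_def, hm'_def]
        push_cast [Nat.cast_sub h]
        ring
      rw [this]; exact hrup _ (by omega)
    · have : f k = i - ((k - r : ℕ) : ZMod n) := by
        rw [hf_def, hm'_def]
        push_cast [Nat.cast_sub (le_of_lt h)]
        ring
      rw [this]; exact hsdown _ (by omega)
  have hrange : List.range (n - 1) =
      List.range K ++ (List.range (n - 1 - K)).map (K + ·) := by
    rw [← List.range_add]
    congr 1
    omega
  have hsplit : cword n S m' =
      (List.range K).map f ++
        (((List.range (n - 1 - K)).map (K + ·)).map f).filter (fun j => j ∈ S) := by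
    rw [cword, hrange, List.map_append, List.filter_append]
    congr 1
    rw [List.filter_eq_self]
    intro j hj
    rw [List.mem_map] at hj
    obtain ⟨k, hk, rfl⟩ := hj
    rw [List.mem_range] at hk
    simp only [decide_eq_true_eq]
    exact hfS k (by omega)
  -- the tail letters avoid residues a = i - s and a - 1
  set x : ℤ := ((i - ((s : ℕ) : ZMod n)).val : ℤ) with hx_def
  have hx : (x : ZMod n) = i - ((s : ℕ) : ZMod n) := by
    rw [hx_def]
    push_cast
    exact natCast_val_zmod hn _
  have htail : ∀ j ∈ (((List.range (n - 1 - K)).map (K + ·)).map f).filter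
      (fun j => j ∈ S), (x : ZMod n) ≠ j ∧ (x : ZMod n) ≠ j + 1 := by
    intro j hj
    rw [List.mem_filter] at hj
    obtain ⟨hj1, hj2⟩ := hj
    simp only [decide_eq_true_eq] at hj2
    rw [List.mem_map] at hj1
    obtain ⟨k', hk', rfl⟩ := hj1
    rw [List.mem_map] at hk'
    obtain ⟨k, hk, rfl⟩ := hk'
    rw [List.mem_range] at hk
    constructor
    · intro heq
      -- x ≡ f (r+s), f injective on < n
      have : ((r + s : ℕ) : ZMod n) = ((K + k : ℕ) : ZMod n) := by
        rw [hx, hf_def, hm'_def] at heq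
        push_cast at heq ⊢
        linear_combination -heq
      have := natCast_inj' hn (by omega) (by omega) this
      omega
    · intro heq
      -- then j = f (r+s+1) = i - (s+1) ∉ S
      have hks : ((K + k : ℕ) : ZMod n) = ((r + s + 1 : ℕ) : ZMod n) := by
        rw [hx, hf_def, hm'_def] at heq
        push_cast at heq ⊢
        linear_combination heq
      have hk_eq := natCast_inj' hn (by omega) (by omega) hks
      apply hs1
      have : f (K + k) = i - ((s + 1 : ℕ) : ZMod n) := by
        rw [hk_eq, hf_def, hm'_def]
        push_cast
        ring
      rwa [this] at hj2
  -- compute the image of x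
  have hximg : phi hn (awordProd n (cword n S m')) x = x + K := by
    rw [hsplit, awordProd_append, map_mul, Equiv.Perm.mul_apply,
      prod_fix hn htail]
    refine phi_block hn m' K x ?_
    rw [hx, hm'_def, hK_def]
    push_cast
    ring
  -- conclude
  by_contra hil
  have hcut : cutKeep (x + (s : ℤ)) (phi hn (awordProd n l)) := by
    refine prod_cutKeep hn ?_
    intro j hj heq
    have hcx : ((x + (s : ℤ) : ℤ) : ZMod n) = i := by
      push_cast [hx]
      ring
    have hij : i = j := by rw [← hcx, heq]
    exact hil (hij ▸ hj)
  rw [hl, hprod] at hcut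
  have h1 := (hcut x).2 (by omega)
  rw [hximg] at h1
  omega


variable {n : ℕ}

lemma isReduced_cword [NeZero n] (hn : 2 < n) {S : Finset (ZMod n)}
    (hS : S ≠ Finset.univ) {m : ZMod n} (hm : m ∉ S) :
    IsReducedAWord n (awordProd n (cword n S m)) (cword n S m) := by
  refine ⟨rfl, fun l' hl' => ?_⟩
  have hsub : S ⊆ l'.toFinset := by
    intro i hi
    rw [List.mem_toFinset]
    exact mem_of_prodeq hn hS hm hl' hi
  calc (cword n S m).length = S.card := cword_length hn hm
    _ ≤ l'.toFinset.card := Finset.card_le_card hsub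
    _ ≤ l'.length := l'.toFinset_card_le

lemma isCycDec_cword [NeZero n] (hn : 2 < n) {S : Finset (ZMod n)}
    (hS : S ≠ Finset.univ) {m : ZMod n} (hm : m ∉ S) :
    IsCyclicallyDecreasing n (awordProd n (cword n S m)) :=
  ⟨cword n S m, (pw_iff hn _).1 (cword_pw hn S m), isReduced_cword hn hS hm⟩

lemma exists_not_mem' {S : Finset (ZMod n)} [NeZero n] (hS : S ≠ Finset.univ) :
    ∃ m, m ∉ S := by
  by_contra hc
  push_neg at hc
  exact hS (Finset.eq_univ_iff_forall.2 hc)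

/-- The forward map of the bijection. -/
noncomputable def F [NeZero n] (hn : 2 < n)
    (S : {S : Finset (ZMod n) // S ≠ Finset.univ}) :
    {w : AffineSymmetricGroup n // IsCyclicallyDecreasing n w} :=
  ⟨awordProd n (cword n S.1 (exists_not_mem' S.2).choose),
    isCycDec_cword hn S.2 (exists_not_mem' S.2).choose_spec⟩

lemma F_injective [NeZero n] (hn : 2 < n) : Function.Injective (F (n := n) hn) := by
  intro S₁ S₂ h
  have hval : awordProd n (cword n S₁.1 (exists_not_mem' S₁.2).choose) =
      awordProd n (cword n S₂.1 (exists_not_mem' S₂.2).choose) := congrArg Subtype.val h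
  apply Subtype.ext
  apply Finset.Subset.antisymm
  · intro i hi
    have := mem_of_prodeq hn S₁.2 (exists_not_mem' S₁.2).choose_spec hval.symm hi
    rwa [← List.mem_toFinset, cword_toFinset hn (exists_not_mem' S₂.2).choose_spec] at this
  · intro i hi
    have := mem_of_prodeq hn S₂.2 (exists_not_mem' S₂.2).choose_spec hval hi
    rwa [← List.mem_toFinset, cword_toFinset hn (exists_not_mem' S₁.2).choose_spec] at this

lemma F_surjective [NeZero n] (hn : 2 < n) : Function.Surjective (F (n := n) hn) := by
  rintro ⟨w, l, hICD, hred⟩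
  have hpw : PW n l := (pw_iff hn l).2 hICD
  have hSne : l.toFinset ≠ Finset.univ := by
    intro hu
    match l, hICD with
    | [], h =>
      have : (0 : ZMod n) ∈ ([] : List (ZMod n)).toFinset := by
        rw [hu]; exact Finset.mem_univ _
      simp at this
    | a :: t, h =>
      have h1 : a ∈ a :: t := List.mem_cons_self
      have h2 : a + 1 ∈ a :: t := by
        rw [← List.mem_toFinset, hu]; exact Finset.mem_univ _
      have := h.2 a h1 h2
      rw [List.idxOf_cons_self] at this
      omega
  refine ⟨⟨l.toFinset, hSne⟩, ?_⟩
  apply Subtype.ext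
  show awordProd n (cword n l.toFinset _) = w
  rw [prod_eq_of_pw hn _ l (cword_pw hn _ _) hpw
    (cword_toFinset hn (exists_not_mem' hSne).choose_spec), hred.1]

end CycDec


open CycDec in
/-- There is a bijection between strict subsets `S ⊊ ℤ/nℤ` and cyclically decreasing
elements of the affine symmetric group `S̃_n`, sending `S` to the unique cyclically
decreasing element whose reduced words use exactly the simple generators `{s_i : i ∈ S}`. -/
theorem cyclicallyDecreasing_bijection (n : ℕ) [NeZero n] (hn : 2 < n) :
    ∃ e : {S : Finset (ZMod n) // S ≠ Finset.univ} ≃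
          {w : AffineSymmetricGroup n // IsCyclicallyDecreasing n w},
      ∀ S : {S : Finset (ZMod n) // S ≠ Finset.univ}, ∀ l : List (ZMod n),
        IsReducedAWord n ((e S) : AffineSymmetricGroup n) l → l.toFinset = (S : Finset (ZMod n)) := by
  refine ⟨Equiv.ofBijective (F hn) ⟨F_injective hn, F_surjective hn⟩, ?_⟩
  rintro S l ⟨hprod, hmin⟩
  have hval : (Equiv.ofBijective (F hn) ⟨F_injective hn, F_surjective hn⟩ S :
      AffineSymmetricGroup n) = awordProd n (cword n S.1 (exists_not_mem' S.2).choose) := rfl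
  rw [hval] at hprod hmin
  have hsub : S.1 ⊆ l.toFinset := by
    intro i hi
    rw [List.mem_toFinset]
    exact mem_of_prodeq hn S.2 (exists_not_mem' S.2).choose_spec hprod hi
  have hlen : l.length ≤ S.1.card := by
    have := hmin (cword n S.1 (exists_not_mem' S.2).choose) rfl
    rwa [cword_length hn (exists_not_mem' S.2).choose_spec] at this
  have hcard : l.toFinset.card ≤ S.1.card := le_trans l.toFinset_card_le hlen
  exact (Finset.eq_of_subset_of_card_le hsub hcard).symm
end

section
/- For k = 2 and the affine symmetric group S̃_3, the affine Grassmannian element corresponding to the 2-bounded partition (2^a, 1^b) has exactly binomial(⌊b/2⌋ + a, a) reduced words. -/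
/-- The canonical word for the affine Grassmannian element of `S̃_3` corresponding to
the 2-bounded partition `(2^a, 1^b)`: the residues `j − i (mod 3)` of the cells `(i,j)`
of the partition, read row by row from the shortest (top) row to the longest (bottom)
row, each row from right to left. -/
def grassmannianWord (a b : ℕ) : List (ZMod 3) :=
  ((List.range b).map fun t => -((a + b - 1 - t : ℕ) : ZMod 3)) ++
  ((List.range a).map fun t =>
      [1 - ((a - 1 - t : ℕ) : ZMod 3), -((a - 1 - t : ℕ) : ZMod 3)]).flatten

namespace S3Aux

/-- integer model of the simple reflection -/
def sigZ (j x : ℤ) : ℤ :=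
  if x % 3 = j % 3 then x + 1 else if x % 3 = (j + 1) % 3 then x - 1 else x

def sig (i : ZMod 3) (x : ℤ) : ℤ :=
  if (x : ZMod 3) = i then x + 1 else if (x : ZMod 3) = i + 1 then x - 1 else x

lemma sigZ_eval_a {j x : ℤ} (h : x % 3 = j % 3) : sigZ j x = x + 1 := by
  unfold sigZ; rw [if_pos h]

lemma sigZ_eval_b {j x : ℤ} (h : x % 3 = (j + 1) % 3) : sigZ j x = x - 1 := by
  unfold sigZ; rw [if_neg (by omega), if_pos h]

lemma sigZ_eval_c {j x : ℤ} (h : x % 3 = (j + 2) % 3) : sigZ j x = x := by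
  unfold sigZ; rw [if_neg (by omega), if_neg (by omega)]

lemma sig_intCast (j x : ℤ) : sig ((j : ℤ) : ZMod 3) x = sigZ j x := by
  unfold sig sigZ
  rw [show ((j : ℤ) : ZMod 3) + 1 = ((j + 1 : ℤ) : ZMod 3) by push_cast; ring]
  simp only [ZMod.intCast_eq_intCast_iff']
  norm_num

lemma zmod3_surj (i : ZMod 3) : ∃ j : ℤ, ((j : ℤ) : ZMod 3) = i :=
  ⟨(i.val : ℤ), by push_cast; simp [ZMod.natCast_val]⟩

lemma sigZ_char (j x : ℤ) :
    (x % 3 = j % 3 ∧ sigZ j x = x + 1) ∨ (x % 3 = (j + 1) % 3 ∧ sigZ j x = x - 1) ∨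
      (x % 3 = (j + 2) % 3 ∧ sigZ j x = x) := by
  unfold sigZ; split_ifs with h1 h2 <;> [exact Or.inl ⟨h1, rfl⟩;
    exact Or.inr (Or.inl ⟨h2, rfl⟩); exact Or.inr (Or.inr ⟨by omega, rfl⟩)]

lemma sigZ_invol (j x : ℤ) : sigZ j (sigZ j x) = x := by
  have c1 := sigZ_char j x
  have c2 := sigZ_char j (sigZ j x)
  omega

lemma sig_invol (i : ZMod 3) (x : ℤ) : sig i (sig i x) = x := by
  obtain ⟨j, rfl⟩ := zmod3_surj i
  rw [sig_intCast, sig_intCast, sigZ_invol]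

/-- the simple reflection as a permutation of ℤ -/
def sigE (i : ZMod 3) : Equiv.Perm ℤ :=
  ⟨sig i, sig i, sig_invol i, sig_invol i⟩

lemma sigE_apply (i : ZMod 3) (x : ℤ) : sigE i x = sig i x := rfl

lemma sigZ_braid (j x : ℤ) :
    sigZ j (sigZ (j + 1) (sigZ j x)) = sigZ (j + 1) (sigZ j (sigZ (j + 1) x)) := by
  have c1 := sigZ_char j x
  have c2 := sigZ_char (j + 1) (sigZ j x)
  have c3 := sigZ_char j (sigZ (j + 1) (sigZ j x))
  have c4 := sigZ_char (j + 1) x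
  have c5 := sigZ_char j (sigZ (j + 1) x)
  have c6 := sigZ_char (j + 1) (sigZ j (sigZ (j + 1) x))
  omega

lemma sig_braid (i : ZMod 3) (x : ℤ) :
    sig i (sig (i + 1) (sig i x)) = sig (i + 1) (sig i (sig (i + 1) x)) := by
  obtain ⟨j, rfl⟩ := zmod3_surj i
  rw [show ((j : ℤ) : ZMod 3) + 1 = ((j + 1 : ℤ) : ZMod 3) by push_cast; ring]
  simp only [sig_intCast, sigZ_braid]

lemma rels_check : ∀ r ∈ affineRels 3, FreeGroup.lift sigE r = 1 := by
  rintro r (⟨i, rfl⟩ | ⟨i, rfl⟩ | ⟨i, j, h1, h2, h3, rfl⟩)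
  · simp only [map_mul, FreeGroup.lift_apply_of]
    ext x
    exact sig_invol i x
  · simp only [map_mul, map_inv, FreeGroup.lift_apply_of]
    rw [mul_inv_eq_one]
    ext x
    simp only [Equiv.Perm.mul_apply, sigE_apply]
    exact sig_braid i x
  · exfalso
    revert h1 h2 h3
    revert i j
    decide

/-- evaluation homomorphism into permutations of ℤ -/
def phi : AffineSymmetricGroup 3 →* Equiv.Perm ℤ := PresentedGroup.toGroup rels_check

lemma phi_of (i : ZMod 3) : phi (PresentedGroup.of i) = sigE i := PresentedGroup.toGroup.of rels_check

/-- the window of an element -/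
def window (w : AffineSymmetricGroup 3) : ℤ × ℤ × ℤ := (phi w 1, phi w 2, phi w 3)

def act (i : ZMod 3) (v : ℤ × ℤ × ℤ) : ℤ × ℤ × ℤ := (sig i v.1, sig i v.2.1, sig i v.2.2)

def actZ (j : ℤ) (v : ℤ × ℤ × ℤ) : ℤ × ℤ × ℤ := (sigZ j v.1, sigZ j v.2.1, sigZ j v.2.2)

lemma act_intCast (j : ℤ) (v : ℤ × ℤ × ℤ) : act ((j : ℤ) : ZMod 3) v = actZ j v := by
  simp [act, actZ, sig_intCast]

lemma window_one : window 1 = (1, 2, 3) := by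
  simp [window]

lemma window_mul (i : ZMod 3) (w : AffineSymmetricGroup 3) :
    window (PresentedGroup.of i * w) = act i (window w) := by
  simp [window, act, map_mul, phi_of, sigE_apply]

end S3Aux

namespace S3Aux

def Pst (x y : ℤ) : ℕ := ((y - x) / 3).natAbs

lemma Pst_ab {x y : ℤ} (h : (y - x) % 3 = 1) : Pst (x + 1) (y - 1) ≤ Pst x y + 1 := by
  unfold Pst; omega

lemma Pst_ba {x y : ℤ} (h : (y - x) % 3 = 2) : Pst (x - 1) (y + 1) ≤ Pst x y + 1 := by
  unfold Pst; omega

lemma Pst_s1 {x y : ℤ} (h : (y - x) % 3 = 2) : Pst (x + 1) y = Pst x y := by unfold Pst; omega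

lemma Pst_s2 {x y : ℤ} (h : (y - x) % 3 = 1) : Pst x (y + 1) = Pst x y := by unfold Pst; omega

lemma Pst_s3 {x y : ℤ} (h : (y - x) % 3 = 1) : Pst (x - 1) y = Pst x y := by unfold Pst; omega

lemma Pst_s4 {x y : ℤ} (h : (y - x) % 3 = 2) : Pst x (y - 1) = Pst x y := by unfold Pst; omega

/-- inversion statistic -/
def Iv (v : ℤ × ℤ × ℤ) : ℕ := Pst v.1 v.2.1 + Pst v.1 v.2.2 + Pst v.2.1 v.2.2

/-- entries pairwise distinct mod 3 -/
def Dis (v : ℤ × ℤ × ℤ) : Prop :=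
  v.1 % 3 ≠ v.2.1 % 3 ∧ v.1 % 3 ≠ v.2.2 % 3 ∧ v.2.1 % 3 ≠ v.2.2 % 3

lemma step (j : ℤ) (v : ℤ × ℤ × ℤ) (h : Dis v) :
    Dis (actZ j v) ∧ Iv (actZ j v) ≤ Iv v + 1 := by
  obtain ⟨v1, v2, v3⟩ := v
  simp only [Dis, Iv, actZ] at *
  rcases sigZ_char j v1 with ⟨h1, e1⟩ | ⟨h1, e1⟩ | ⟨h1, e1⟩ <;>
    rcases sigZ_char j v2 with ⟨h2, e2⟩ | ⟨h2, e2⟩ | ⟨h2, e2⟩ <;>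
    rcases sigZ_char j v3 with ⟨h3, e3⟩ | ⟨h3, e3⟩ | ⟨h3, e3⟩ <;>
    rw [e1, e2, e3]
  · omega
  · omega
  · omega
  · omega
  · omega
  · have p1 := Pst_ab (x := v1) (y := v2) (by omega)
    have p2 := Pst_s1 (x := v1) (y := v3) (by omega)
    have p3 := Pst_s3 (x := v2) (y := v3) (by omega)
    exact ⟨⟨by omega, by omega, by omega⟩, by omega⟩
  · omega
  · have p1 := Pst_s1 (x := v1) (y := v2) (by omega)
    have p2 := Pst_ab (x := v1) (y := v3) (by omega)
    have p3 := Pst_s4 (x := v2) (y := v3) (by omega)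
    exact ⟨⟨by omega, by omega, by omega⟩, by omega⟩
  · omega
  · omega
  · omega
  · have p1 := Pst_ba (x := v1) (y := v2) (by omega)
    have p2 := Pst_s3 (x := v1) (y := v3) (by omega)
    have p3 := Pst_s1 (x := v2) (y := v3) (by omega)
    exact ⟨⟨by omega, by omega, by omega⟩, by omega⟩
  · omega
  · omega
  · omega
  · have p1 := Pst_s3 (x := v1) (y := v2) (by omega)
    have p2 := Pst_ba (x := v1) (y := v3) (by omega)
    have p3 := Pst_s2 (x := v2) (y := v3) (by omega)
    exact ⟨⟨by omega, by omega, by omega⟩, by omega⟩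
  · omega
  · omega
  · omega
  · have p1 := Pst_s2 (x := v1) (y := v2) (by omega)
    have p2 := Pst_s4 (x := v1) (y := v3) (by omega)
    have p3 := Pst_ab (x := v2) (y := v3) (by omega)
    exact ⟨⟨by omega, by omega, by omega⟩, by omega⟩
  · omega
  · have p1 := Pst_s4 (x := v1) (y := v2) (by omega)
    have p2 := Pst_s2 (x := v1) (y := v3) (by omega)
    have p3 := Pst_ba (x := v2) (y := v3) (by omega)
    exact ⟨⟨by omega, by omega, by omega⟩, by omega⟩
  · omega
  · omega
  · omega
  · omega
  · omega

lemma awordProd_nil : awordProd 3 [] = 1 := rfl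

lemma awordProd_cons (i : ZMod 3) (l : List (ZMod 3)) :
    awordProd 3 (i :: l) = PresentedGroup.of i * awordProd 3 l := by
  simp [awordProd]

lemma lb (l : List (ZMod 3)) :
    Dis (window (awordProd 3 l)) ∧ Iv (window (awordProd 3 l)) ≤ l.length := by
  induction l with
  | nil =>
    rw [awordProd_nil, window_one]
    exact ⟨⟨by norm_num, by norm_num, by norm_num⟩, by simp [Iv, Pst]⟩
  | cons i l ih =>
    obtain ⟨j, rfl⟩ := zmod3_surj i
    rw [awordProd_cons, window_mul, act_intCast]
    obtain ⟨h1, h2⟩ := step j _ ih.1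
    exact ⟨h1, by simpa using h2.trans (by simpa using Nat.add_le_add_right ih.2 1)⟩

/-- number of words of given length with given product -/
noncomputable def Cnt (w : AffineSymmetricGroup 3) (n : ℕ) : ℕ :=
  Nat.card {l : List (ZMod 3) // awordProd 3 l = w ∧ l.length = n}

instance cntFinite (w : AffineSymmetricGroup 3) (n : ℕ) :
    Finite {l : List (ZMod 3) // awordProd 3 l = w ∧ l.length = n} :=
  ((List.finite_length_eq (ZMod 3) n).subset fun _ hl => hl.2).to_subtype

lemma cnt_one_word : Cnt 1 0 = 1 := by
  have : Unique {l : List (ZMod 3) // awordProd 3 l = 1 ∧ l.length = 0} :=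
    { default := ⟨[], rfl, rfl⟩
      uniq := by rintro ⟨l, -, hl⟩; ext1; exact List.length_eq_zero_iff.mp hl }
  exact Nat.card_unique

lemma cnt_vanish (w : AffineSymmetricGroup 3) (n : ℕ) (h : n < Iv (window w)) : Cnt w n = 0 := by
  have : IsEmpty {l : List (ZMod 3) // awordProd 3 l = w ∧ l.length = n} := by
    constructor
    rintro ⟨l, h1, h2⟩
    have := (lb l).2
    rw [h1, h2] at this
    omega
  exact Nat.card_of_isEmpty

lemma of_sq (i : ZMod 3) :
    (PresentedGroup.of i : AffineSymmetricGroup 3) * PresentedGroup.of i = 1 := by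
  have hr : (FreeGroup.of i * FreeGroup.of i) ∈ affineRels 3 := Or.inl ⟨i, rfl⟩
  have : (QuotientGroup.mk (FreeGroup.of i * FreeGroup.of i) :
      AffineSymmetricGroup 3) = 1 :=
    (QuotientGroup.eq_one_iff _).mpr (Subgroup.subset_normalClosure hr)
  simp [PresentedGroup.of, QuotientGroup.mk_mul] at this ⊢; exact this

lemma braid_of (i : ZMod 3) :
    (PresentedGroup.of i : AffineSymmetricGroup 3) * PresentedGroup.of (i+1) * PresentedGroup.of i
      = PresentedGroup.of (i+1) * PresentedGroup.of i * PresentedGroup.of (i+1) := by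
  have hr : (FreeGroup.of i * FreeGroup.of (i+1) * FreeGroup.of i *
      (FreeGroup.of (i+1) * FreeGroup.of i * FreeGroup.of (i+1))⁻¹) ∈ affineRels 3 :=
    Or.inr (Or.inl ⟨i, rfl⟩)
  have h1 : (QuotientGroup.mk (FreeGroup.of i * FreeGroup.of (i+1) * FreeGroup.of i *
      (FreeGroup.of (i+1) * FreeGroup.of i * FreeGroup.of (i+1))⁻¹) :
      AffineSymmetricGroup 3) = 1 :=
    (QuotientGroup.eq_one_iff _).mpr (Subgroup.subset_normalClosure hr)
  rw [QuotientGroup.mk_mul, QuotientGroup.mk_inv, mul_inv_eq_one] at h1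
  simp [PresentedGroup.of, QuotientGroup.mk_mul] at h1 ⊢; exact h1

lemma head_eq_of_mem {w : AffineSymmetricGroup 3} {n : ℕ} {i : ZMod 3} {t : List (ZMod 3)}
    (h1 : awordProd 3 (i :: t) = w) (h2 : (i :: t).length = n + 1)
    (hvan : n < Iv (window (PresentedGroup.of i * w))) : False := by
  have hwin : PresentedGroup.of i * w = awordProd 3 t := by
    rw [← h1, awordProd_cons, ← mul_assoc, of_sq, one_mul]
  rw [hwin] at hvan
  have := (lb t).2
  simp only [List.length_cons] at h2
  omega

/-- one-descent recursion -/
lemma cnt_one {w w₁ : AffineSymmetricGroup 3} {j : ZMod 3} {n : ℕ}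
    (hw : w = PresentedGroup.of j * w₁)
    (hvan : ∀ i : ZMod 3, i ≠ j → n < Iv (window (PresentedGroup.of i * w))) :
    Cnt w (n + 1) = Cnt w₁ n := by
  apply Nat.card_congr
  refine (Equiv.ofBijective (fun x : {l : List (ZMod 3) // awordProd 3 l = w₁ ∧ l.length = n} =>
    (⟨j :: x.1, by rw [awordProd_cons, x.2.1, hw], by simp [x.2.2]⟩ :
      {l : List (ZMod 3) // awordProd 3 l = w ∧ l.length = n + 1})) ⟨?_, ?_⟩).symm
  · rintro ⟨l, hl⟩ ⟨l', hl'⟩ h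
    simp only [Subtype.mk.injEq, List.cons.injEq] at h
    exact Subtype.ext h.2
  · rintro ⟨l, h1, h2⟩
    match l, h1, h2 with
    | [], h1, h2 => simp at h2
    | i :: t, h1, h2 =>
      have hij : i = j := by
        by_contra hne
        exact head_eq_of_mem h1 h2 (hvan i hne)
      subst hij
      have ht : awordProd 3 t = w₁ := by
        rw [awordProd_cons, hw] at h1
        exact mul_left_cancel h1
      exact ⟨⟨t, ht, by simpa using h2⟩, rfl⟩

/-- two-descent recursion -/
lemma cnt_two {w w₁ w₂ : AffineSymmetricGroup 3} {j₁ j₂ : ZMod 3} {n : ℕ}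
    (hj : j₁ ≠ j₂)
    (hw1 : w = PresentedGroup.of j₁ * w₁) (hw2 : w = PresentedGroup.of j₂ * w₂)
    (hvan : ∀ i : ZMod 3, i ≠ j₁ → i ≠ j₂ → n < Iv (window (PresentedGroup.of i * w))) :
    Cnt w (n + 1) = Cnt w₁ n + Cnt w₂ n := by
  unfold Cnt
  rw [← Nat.card_sum]
  apply Nat.card_congr
  refine (Equiv.ofBijective (fun x :
      {l : List (ZMod 3) // awordProd 3 l = w₁ ∧ l.length = n} ⊕
      {l : List (ZMod 3) // awordProd 3 l = w₂ ∧ l.length = n} =>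
    (Sum.elim
      (fun y : {l : List (ZMod 3) // awordProd 3 l = w₁ ∧ l.length = n} =>
        (⟨j₁ :: y.1, by rw [awordProd_cons, y.2.1, hw1], by simp [y.2.2]⟩ :
          {l : List (ZMod 3) // awordProd 3 l = w ∧ l.length = n + 1}))
      (fun y : {l : List (ZMod 3) // awordProd 3 l = w₂ ∧ l.length = n} =>
        (⟨j₂ :: y.1, by rw [awordProd_cons, y.2.1, hw2], by simp [y.2.2]⟩ :
          {l : List (ZMod 3) // awordProd 3 l = w ∧ l.length = n + 1})) x)) ⟨?_, ?_⟩).symm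
  · rintro (⟨l, hl⟩ | ⟨l, hl⟩) (⟨l', hl'⟩ | ⟨l', hl'⟩) h <;>
      simp only [Sum.elim_inl, Sum.elim_inr, Subtype.mk.injEq, List.cons.injEq] at h
    · exact congrArg Sum.inl (Subtype.ext h.2)
    · exact absurd h.1 hj
    · exact absurd h.1 (Ne.symm hj)
    · exact congrArg Sum.inr (Subtype.ext h.2)
  · rintro ⟨l, h1, h2⟩
    match l, h1, h2 with
    | [], h1, h2 => simp at h2
    | i :: t, h1, h2 =>
      rcases eq_or_ne i j₁ with rfl | hne1
      · have ht : awordProd 3 t = w₁ := by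
          rw [awordProd_cons, hw1] at h1
          exact mul_left_cancel h1
        exact ⟨Sum.inl ⟨t, ht, by simpa using h2⟩, rfl⟩
      · rcases eq_or_ne i j₂ with rfl | hne2
        · have ht : awordProd 3 t = w₂ := by
            rw [awordProd_cons, hw2] at h1
            exact mul_left_cancel h1
          exact ⟨Sum.inr ⟨t, ht, by simpa using h2⟩, rfl⟩
        · exact absurd (head_eq_of_mem h1 h2 (hvan i hne1 hne2)) (by simp)



lemma awordProd_append (l₁ l₂ : List (ZMod 3)) :
    awordProd 3 (l₁ ++ l₂) = awordProd 3 l₁ * awordProd 3 l₂ := by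
  simp [awordProd]

/-- the second (2-row) part of the grassmannian word -/
def Apart (a : ℕ) : List (ZMod 3) :=
  ((List.range a).map fun t =>
      [1 - ((a - 1 - t : ℕ) : ZMod 3), -((a - 1 - t : ℕ) : ZMod 3)]).flatten

lemma gw_eq (a b : ℕ) :
    grassmannianWord a b =
      ((List.range b).map fun t => -((a + b - 1 - t : ℕ) : ZMod 3)) ++ Apart a := rfl

lemma Apart_succ (a : ℕ) :
    Apart (a + 1) = (1 - (a : ZMod 3)) :: (-(a : ZMod 3)) :: Apart a := by
  unfold Apart
  rw [List.range_succ_eq_map, List.map_cons, List.map_map]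
  have h0 : (a + 1 - 1 - 0 : ℕ) = a := by omega
  rw [h0, List.flatten_cons]
  have : ((fun t => [1 - ((a + 1 - 1 - t : ℕ) : ZMod 3), -((a + 1 - 1 - t : ℕ) : ZMod 3)]) ∘
      Nat.succ) = fun t => [1 - ((a - 1 - t : ℕ) : ZMod 3), -((a - 1 - t : ℕ) : ZMod 3)] := by
    funext t
    have : (a + 1 - 1 - Nat.succ t : ℕ) = (a - 1 - t : ℕ) := by omega
    rw [Function.comp_apply, this]
  rw [this]
  rfl

lemma gw_cons_b (a b : ℕ) :
    grassmannianWord a (b + 1) = (-((a + b : ℕ) : ZMod 3)) :: grassmannianWord a b := by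
  rw [gw_eq, gw_eq]
  rw [List.range_succ_eq_map, List.map_cons, List.map_map]
  have h0 : (a + (b + 1) - 1 - 0 : ℕ) = (a + b : ℕ) := by omega
  rw [h0]
  have : ((fun t => -((a + (b + 1) - 1 - t : ℕ) : ZMod 3)) ∘ Nat.succ) =
      fun t => -((a + b - 1 - t : ℕ) : ZMod 3) := by
    funext t
    have : (a + (b + 1) - 1 - Nat.succ t : ℕ) = (a + b - 1 - t : ℕ) := by omega
    rw [Function.comp_apply, this]
  rw [this]
  rfl

lemma gw_zero (a : ℕ) : grassmannianWord a 0 = Apart a := by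
  rw [gw_eq]; rfl

lemma gw_one (a : ℕ) : grassmannianWord a 1 = (-(a : ZMod 3)) :: Apart a := by
  rw [gw_eq]
  have h0 : (a + 1 - 1 - 0 : ℕ) = a := by omega
  rw [show List.range 1 = [0] from rfl]
  simp [h0]

lemma gw_a0 (a : ℕ) :
    grassmannianWord (a + 1) 0 = (1 - (a : ZMod 3)) :: grassmannianWord a 1 := by
  rw [gw_zero, Apart_succ, gw_one]

lemma gw_len (a b : ℕ) : (grassmannianWord a b).length = 2 * a + b := by
  induction b with
  | zero =>
    induction a with
    | zero => rfl
    | succ a ih =>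
      rw [gw_zero] at ih ⊢
      rw [Apart_succ]
      simp only [List.length_cons]
      omega
  | succ b ih =>
    rw [gw_cons_b]
    simp only [List.length_cons]
    omega

/-- consecutive-residue word -/
def cword (c : ZMod 3) (m : ℕ) : List (ZMod 3) := (List.range m).map fun t => c + (t : ℕ)

lemma cword_succ (c : ZMod 3) (m : ℕ) : cword c (m + 1) = cword c m ++ [c + (m : ℕ)] := by
  simp [cword, List.range_succ]

lemma braid_core (c : ZMod 3) (m : ℕ) :
    awordProd 3 (cword c (2 * m)) * PresentedGroup.of (c + ((2 * m : ℕ) : ZMod 3) + 1) =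
      PresentedGroup.of (c + 1) * awordProd 3 (cword c (2 * m)) := by
  induction m with
  | zero => simp [cword, awordProd]
  | succ m ih =>
    have h2 : 2 * (m + 1) = (2 * m + 1) + 1 := by ring
    have hsingle : ∀ x : ZMod 3, awordProd 3 [x] = PresentedGroup.of x := by
      intro x; simp [awordProd]
    rw [h2, cword_succ, cword_succ, awordProd_append, awordProd_append, hsingle, hsingle]
    have hc1 : c + ((2 * m + 1 : ℕ) : ZMod 3) = c + ((2 * m : ℕ) : ZMod 3) + 1 := by
      push_cast; ring
    have h3 : (3 : ZMod 3) = 0 := by decide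
    have hc2 : c + ((2 * m + 1 + 1 : ℕ) : ZMod 3) + 1 = c + ((2 * m : ℕ) : ZMod 3) := by
      have e : c + ((2 * m + 1 + 1 : ℕ) : ZMod 3) + 1 =
          c + ((2 * m : ℕ) : ZMod 3) + (3 : ZMod 3) := by push_cast; ring
      rw [e, h3, add_zero]
    rw [hc1, hc2]
    set P := awordProd 3 (cword c (2 * m)) with hP
    set d : ZMod 3 := c + ((2 * m : ℕ) : ZMod 3) with hd
    calc P * PresentedGroup.of d * PresentedGroup.of (d + 1) * PresentedGroup.of d
        = P * (PresentedGroup.of d * PresentedGroup.of (d + 1) * PresentedGroup.of d) := by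
          group
      _ = P * (PresentedGroup.of (d + 1) * PresentedGroup.of d * PresentedGroup.of (d + 1)) := by
          rw [braid_of d]
      _ = (P * PresentedGroup.of (d + 1)) * (PresentedGroup.of d * PresentedGroup.of (d + 1)) := by
          group
      _ = (PresentedGroup.of (c + 1) * P) * (PresentedGroup.of d * PresentedGroup.of (d + 1)) := by
          rw [← ih]
      _ = PresentedGroup.of (c + 1) * (P * PresentedGroup.of d * PresentedGroup.of (d + 1)) := by
          group


lemma gw_decomp (a b : ℕ) :
    grassmannianWord a b = cword (-((a + b - 1 : ℕ) : ZMod 3)) b ++ Apart a := by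
  rw [gw_eq]
  congr 1
  unfold cword
  apply List.map_congr_left
  intro t ht
  have ht' : t < b := List.mem_range.mp ht
  rw [show (a + b - 1 - t : ℕ) = (a + b - 1) - t from rfl,
    Nat.cast_sub (by omega : t ≤ a + b - 1)]
  ring

lemma braid_identity (a m : ℕ) :
    awordProd 3 (grassmannianWord (a + 1) (2 * m)) =
      PresentedGroup.of (-((a + 2 * m : ℕ) : ZMod 3) + 1) *
        awordProd 3 (grassmannianWord a (2 * m + 1)) := by
  have hsingle : ∀ x : ZMod 3, awordProd 3 [x] = PresentedGroup.of x := by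
    intro x; simp [awordProd]
  set c : ZMod 3 := -((a + 2 * m : ℕ) : ZMod 3) with hc
  have d1 : grassmannianWord (a + 1) (2 * m) = cword c (2 * m) ++ Apart (a + 1) := by
    rw [gw_decomp (a + 1) (2 * m), show (a + 1 + 2 * m - 1 : ℕ) = (a + 2 * m : ℕ) from by omega]
  have d2 : grassmannianWord a (2 * m + 1) =
      (cword c (2 * m) ++ [c + ((2 * m : ℕ) : ZMod 3)]) ++ Apart a := by
    rw [gw_decomp a (2 * m + 1), show (a + (2 * m + 1) - 1 : ℕ) = (a + 2 * m : ℕ) from by omega,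
      cword_succ]
  rw [d1, d2, Apart_succ, awordProd_append, awordProd_append, awordProd_append, hsingle,
    awordProd_cons, awordProd_cons]
  have e0 : -((a : ℕ) : ZMod 3) = c + ((2 * m : ℕ) : ZMod 3) := by
    rw [hc]; push_cast; ring
  have e1 : (1 : ZMod 3) - ((a : ℕ) : ZMod 3) = c + ((2 * m : ℕ) : ZMod 3) + 1 := by
    rw [hc]; push_cast; ring
  rw [e0, e1]
  set P := awordProd 3 (cword c (2 * m)) with hP
  set Q := awordProd 3 (Apart a) with hQ
  set d : ZMod 3 := c + ((2 * m : ℕ) : ZMod 3) with hd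
  calc P * (PresentedGroup.of (d + 1) * (PresentedGroup.of d * Q))
      = (P * PresentedGroup.of (d + 1)) * (PresentedGroup.of d * Q) := by group
    _ = (PresentedGroup.of (c + 1) * P) * (PresentedGroup.of d * Q) := by rw [braid_core]
    _ = PresentedGroup.of (c + 1) * (P * PresentedGroup.of d * Q) := by group

/-- the window of the grassmannian element, in closed form -/
def wwin (a b : ℕ) : ℤ × ℤ × ℤ :=
  (1 - a - b, 2 - a + ((b / 2 : ℕ) : ℤ), 3 + 2 * a + (((b + 1) / 2 : ℕ) : ℤ))

lemma window_gw01 (a : ℕ) :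
    window (awordProd 3 (grassmannianWord a 0)) = wwin a 0 ∧
      window (awordProd 3 (grassmannianWord a 1)) = wwin a 1 := by
  induction a with
  | zero =>
    constructor
    · rw [show grassmannianWord 0 0 = [] from rfl, awordProd_nil, window_one]
      simp [wwin]
    · rw [show grassmannianWord 0 1 = [(0 : ZMod 3)] from by decide, awordProd_cons,
        window_mul, awordProd_nil, window_one,
        show (0 : ZMod 3) = ((0 : ℤ) : ZMod 3) from by decide, act_intCast]
      simp only [wwin, actZ, sigZ, Prod.mk.injEq]
      norm_num
  | succ a ih =>
    have h0 : window (awordProd 3 (grassmannianWord (a + 1) 0)) = wwin (a + 1) 0 := by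
      rw [gw_a0, awordProd_cons, window_mul, ih.2,
        show (1 : ZMod 3) - ((a : ℕ) : ZMod 3) = ((1 - (a : ℤ) : ℤ) : ZMod 3) from by
          push_cast; ring, act_intCast]
      simp only [wwin, actZ, sigZ, Prod.mk.injEq]
      split_ifs <;> omega
    refine ⟨h0, ?_⟩
    rw [show (1 : ℕ) = 0 + 1 from rfl, gw_cons_b, awordProd_cons, window_mul,
      show grassmannianWord (a + 1) 0 = grassmannianWord (a + 1) (0 + 0) from rfl] at *
    rw [h0,
      show -(((a + 1 + 0 : ℕ)) : ZMod 3) = ((-(a : ℤ) - 1 : ℤ) : ZMod 3) from by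
        push_cast; ring, act_intCast]
    simp only [wwin, actZ, sigZ, Prod.mk.injEq]
    split_ifs <;> omega

lemma window_gw (a b : ℕ) :
    window (awordProd 3 (grassmannianWord a b)) = wwin a b := by
  induction b with
  | zero => exact (window_gw01 a).1
  | succ b ih =>
    rw [gw_cons_b, awordProd_cons, window_mul, ih,
      show -(((a + b : ℕ)) : ZMod 3) = ((-(a : ℤ) - b : ℤ) : ZMod 3) from by
        push_cast; ring, act_intCast]
    simp only [wwin, actZ, sigZ, Prod.mk.injEq]
    split_ifs <;> omega

lemma Iv_wwin (a b : ℕ) : Iv (wwin a b) = 2 * a + b := by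
  simp only [Iv, Pst, wwin]
  omega


lemma zmod3_ne (i c : ZMod 3) (h : i ≠ c) : i = c + 1 ∨ i = c + 2 := by
  revert i c; decide

lemma van_gen (a b : ℕ) (i : ZMod 3) (jz : ℤ) (hi : i = ((jz : ℤ) : ZMod 3)) (n : ℕ)
    (hIv : n < Iv (actZ jz (wwin a b))) :
    n < Iv (window (PresentedGroup.of i * awordProd 3 (grassmannianWord a b))) := by
  rw [window_mul, window_gw, hi, act_intCast]
  exact hIv

set_option maxHeartbeats 4000000 in
lemma main_count : ∀ n a b : ℕ, 2 * a + b = n →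
    Cnt (awordProd 3 (grassmannianWord a b)) (2 * a + b) = Nat.choose (b / 2 + a) a := by
  intro n
  induction n using Nat.strong_induction_on with
  | _ n ih =>
  intro a b hab
  match b, a with
  | 0, 0 =>
    rw [show grassmannianWord 0 0 = [] from rfl, awordProd_nil]
    simpa using cnt_one_word
  | 0, a' + 1 =>
    have hw : awordProd 3 (grassmannianWord (a' + 1) 0) =
        PresentedGroup.of (1 - ((a' : ℕ) : ZMod 3)) * awordProd 3 (grassmannianWord a' 1) := by
      rw [gw_a0, awordProd_cons]
    have hvan : ∀ i : ZMod 3, i ≠ 1 - ((a' : ℕ) : ZMod 3) →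
        2 * a' + 1 < Iv (window (PresentedGroup.of i *
          awordProd 3 (grassmannianWord (a' + 1) 0))) := by
      intro i hne
      rcases zmod3_ne i _ hne with rfl | rfl
      · apply van_gen (a' + 1) 0 _ (2 - (a' : ℤ)) (by push_cast; ring)
        simp only [Iv, Pst, actZ, sigZ, wwin]
        split_ifs <;> omega
      · apply van_gen (a' + 1) 0 _ (3 - (a' : ℤ)) (by push_cast; ring)
        simp only [Iv, Pst, actZ, sigZ, wwin]
        split_ifs <;> omega
    rw [show 2 * (a' + 1) + 0 = (2 * a' + 1) + 1 from by ring, cnt_one hw hvan,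
      ih (2 * a' + 1) (by omega) a' 1 rfl]
    simp [Nat.choose_self]
  | b' + 1, a =>
    have hw : awordProd 3 (grassmannianWord a (b' + 1)) =
        PresentedGroup.of (-((a + b' : ℕ) : ZMod 3)) * awordProd 3 (grassmannianWord a b') := by
      rw [gw_cons_b, awordProd_cons]
    rcases Nat.even_or_odd b' with ⟨m, hm⟩ | ⟨m, hm⟩
    · -- b' even : b odd, single descent
      have hvan : ∀ i : ZMod 3, i ≠ -((a + b' : ℕ) : ZMod 3) →
          2 * a + b' < Iv (window (PresentedGroup.of i *
            awordProd 3 (grassmannianWord a (b' + 1)))) := by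
        intro i hne
        rcases zmod3_ne i _ hne with rfl | rfl
        · apply van_gen a (b' + 1) _ (1 - (a : ℤ) - b') (by push_cast; ring)
          simp only [Iv, Pst, actZ, sigZ, wwin]
          split_ifs <;> omega
        · apply van_gen a (b' + 1) _ (2 - (a : ℤ) - b') (by push_cast; ring)
          simp only [Iv, Pst, actZ, sigZ, wwin]
          split_ifs <;> omega
      rw [show 2 * a + (b' + 1) = (2 * a + b') + 1 from rfl, cnt_one hw hvan,
        ih (2 * a + b') (by omega) a b' rfl,
        show b' / 2 + a = (b' + 1) / 2 + a from by omega]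
    · -- b' odd : b even
      match a with
      | 0 =>
        have hvan : ∀ i : ZMod 3, i ≠ -((0 + b' : ℕ) : ZMod 3) →
            2 * 0 + b' < Iv (window (PresentedGroup.of i *
              awordProd 3 (grassmannianWord 0 (b' + 1)))) := by
          intro i hne
          rcases zmod3_ne i _ hne with rfl | rfl
          · apply van_gen 0 (b' + 1) _ (1 - (b' : ℤ)) (by push_cast; ring)
            simp only [Iv, Pst, actZ, sigZ, wwin]
            split_ifs <;> omega
          · apply van_gen 0 (b' + 1) _ (2 - (b' : ℤ)) (by push_cast; ring)
            simp only [Iv, Pst, actZ, sigZ, wwin]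
            split_ifs <;> omega
        rw [show 2 * 0 + (b' + 1) = (2 * 0 + b') + 1 from rfl, cnt_one hw hvan,
          ih (2 * 0 + b') (by omega) 0 b' rfl]
        simp
      | a'' + 1 =>
        -- two descents
        have hb : b' + 1 = 2 * (m + 1) := by omega
        have hw2 : awordProd 3 (grassmannianWord (a'' + 1) (b' + 1)) =
            PresentedGroup.of (-((a'' + 2 * (m + 1) : ℕ) : ZMod 3) + 1) *
              awordProd 3 (grassmannianWord a'' (2 * (m + 1) + 1)) := by
          rw [hb]; exact braid_identity a'' (m + 1)
        have hj : -(((a'' + 1) + b' : ℕ) : ZMod 3) ≠ -((a'' + 2 * (m + 1) : ℕ) : ZMod 3) + 1 := by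
          rw [show ((a'' + 1) + b' : ℕ) = (a'' + 2 * (m + 1) : ℕ) from by omega]
          have h1 : ∀ c : ZMod 3, c ≠ c + 1 := by decide
          exact h1 _
        have hvan : ∀ i : ZMod 3, i ≠ -(((a'' + 1) + b' : ℕ) : ZMod 3) →
            i ≠ -((a'' + 2 * (m + 1) : ℕ) : ZMod 3) + 1 →
            2 * (a'' + 1) + b' < Iv (window (PresentedGroup.of i *
              awordProd 3 (grassmannianWord (a'' + 1) (b' + 1)))) := by
          intro i hne1 hne2
          rcases zmod3_ne i _ hne1 with rfl | rfl
          · exfalso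
            apply hne2
            rw [show (a'' + 2 * (m + 1) : ℕ) = ((a'' + 1) + b' : ℕ) from by omega]
          · apply van_gen (a'' + 1) (b' + 1) _ (2 - ((a'' + 1 : ℕ) : ℤ) - b')
              (by push_cast; ring)
            simp only [Iv, Pst, actZ, sigZ, wwin]
            split_ifs <;> push_cast <;> omega
        rw [show 2 * (a'' + 1) + (b' + 1) = (2 * (a'' + 1) + b') + 1 from rfl,
          cnt_two hj hw hw2 hvan,
          ih (2 * (a'' + 1) + b') (by omega) (a'' + 1) b' rfl]
        have h2 : 2 * a'' + (2 * (m + 1) + 1) = 2 * (a'' + 1) + b' := by omega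
        rw [show Cnt (awordProd 3 (grassmannianWord a'' (2 * (m + 1) + 1)))
            (2 * (a'' + 1) + b') =
          Cnt (awordProd 3 (grassmannianWord a'' (2 * (m + 1) + 1)))
            (2 * a'' + (2 * (m + 1) + 1)) from by rw [h2],
          ih (2 * a'' + (2 * (m + 1) + 1)) (by omega) a'' (2 * (m + 1) + 1) rfl]
        rw [show b' / 2 + (a'' + 1) = m + a'' + 1 from by omega,
          show (2 * (m + 1) + 1) / 2 + a'' = m + a'' + 1 from by omega,
          show (b' + 1) / 2 + (a'' + 1) = (m + a'' + 1) + 1 from by omega,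
          Nat.choose_succ_succ (m + a'' + 1) a'']
        simp only [Nat.succ_eq_add_one]
        omega

end S3Aux

/-- For `k = 2`: the affine Grassmannian element of `S̃_3` corresponding to the
2-bounded partition `(2^a, 1^b)` has exactly `binomial(⌊b/2⌋ + a, a)` reduced words. -/
theorem card_reducedWords_grassmannian_S3 (a b : ℕ) :
    Nat.card {l : List (ZMod 3) // IsReducedAWord 3 (awordProd 3 (grassmannianWord a b)) l}
      = Nat.choose (b / 2 + a) a := by
  have hlen : (grassmannianWord a b).length = 2 * a + b := S3Aux.gw_len a b
  have hIv : S3Aux.Iv (S3Aux.window (awordProd 3 (grassmannianWord a b))) = 2 * a + b := by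
    rw [S3Aux.window_gw, S3Aux.Iv_wwin]
  have hiff : ∀ l : List (ZMod 3),
      IsReducedAWord 3 (awordProd 3 (grassmannianWord a b)) l ↔
        (awordProd 3 l = awordProd 3 (grassmannianWord a b) ∧ l.length = 2 * a + b) := by
    intro l
    constructor
    · rintro ⟨h1, h2⟩
      have h3 := h2 (grassmannianWord a b) rfl
      have h4 := (S3Aux.lb l).2
      rw [h1, hIv] at h4
      exact ⟨h1, by omega⟩
    · rintro ⟨h1, h2⟩
      refine ⟨h1, fun l' hl' => ?_⟩
      have h4 := (S3Aux.lb l').2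
      rw [hl', hIv] at h4
      omega
  rw [Nat.card_congr (Equiv.subtypeEquivRight hiff)]
  exact S3Aux.main_count (2 * a + b) a b rfl
end
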